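/- Let k be a field and let A = k⟨a,b⟩/(a², b², (ab)^m − (ba)^m, (ab)^m a, (ba)^m b) be the quotient of the free algebra on two generators a, b by these relations, for a fixed m ≥ 1. Then A is a free k-module of rank 4m. -/

import Mathlib

open FreeAlgebra

/-- Relations of the torus-loop algebra `k⟨a,b⟩/(a², b², (ab)^m − (ba)^m, (ab)^m a, (ba)^m b)`,
where `a = ι k 0` and `b = ι k 1`. -/
inductive TorusRel (k : Type*) [Field k] (m : ℕ) :
    FreeAlgebra k (Fin 2) → FreeAlgebra k (Fin 2) → Prop
  | asq : TorusRel k m (ι k 0 * ι k 0) 0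
  | bsq : TorusRel k m (ι k 1 * ι k 1) 0
  | comm : TorusRel k m ((ι k 0 * ι k 1) ^ m) ((ι k 1 * ι k 0) ^ m)
  | soca : TorusRel k m ((ι k 0 * ι k 1) ^ m * ι k 0) 0
  | socb : TorusRel k m ((ι k 1 * ι k 0) ^ m * ι k 1) 0

set_option linter.unreachableTactic false
set_option linter.unusedTactic false

namespace TorusAux

inductive Wd where
  | one : Wd
  | top : Wd
  | w : Bool → ℕ → Wd
deriving DecidableEq

variable (k : Type*) [Field k] (m : ℕ)

noncomputable def tgt (s : Bool) : Wd → (Wd →₀ k)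
  | .one => Finsupp.single (.w s 1) 1
  | .top => 0
  | .w t ℓ =>
      if t = s ∨ ℓ = 0 then 0
      else if ℓ + 1 < 2 * m then Finsupp.single (.w s (ℓ + 1)) 1
      else if ℓ + 1 = 2 * m then Finsupp.single .top 1
      else 0

noncomputable def Lop (s : Bool) : Module.End k (Wd →₀ k) :=
  Finsupp.linearCombination k (tgt k m s)

@[simp] lemma Lop_single (s : Bool) (x : Wd) :
    Lop k m s (Finsupp.single x 1) = tgt k m s x := by
  simp [Lop]

lemma end_ext {f g : Module.End k (Wd →₀ k)}
    (h : ∀ x : Wd, f (Finsupp.single x 1) = g (Finsupp.single x 1)) : f = g := by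
  apply Finsupp.lhom_ext
  intro a b
  have hb : (Finsupp.single a b : Wd →₀ k) = b • Finsupp.single a 1 := by
    simp [Finsupp.smul_single]
  rw [hb, map_smul, map_smul, h]

lemma single_w_congr {a b : ℕ} (s : Bool) (h : a = b) :
    (Finsupp.single (Wd.w s a) 1 : Wd →₀ k) = Finsupp.single (Wd.w s b) 1 := by rw [h]

lemma Lop_sq (s : Bool) : Lop k m s * Lop k m s = 0 := by
  apply end_ext
  intro x
  rcases x with _ | _ | ⟨t, ℓ⟩
  · simp [Module.End.mul_apply, tgt]
  · simp [Module.End.mul_apply, tgt]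
  · simp only [Module.End.mul_apply, Lop_single, LinearMap.zero_apply]
    by_cases h : t = s ∨ ℓ = 0
    · simp [tgt, h]
    · simp only [tgt, h, if_neg, not_false_iff]
      split_ifs <;> simp [tgt]

noncomputable def ptgt (s : Bool) (n : ℕ) : Wd → (Wd →₀ k)
  | .one =>
      if 2 * n < 2 * m then Finsupp.single (.w s (2 * n)) 1
      else if 2 * n = 2 * m then Finsupp.single .top 1
      else 0
  | .top => 0
  | .w t ℓ =>
      if t = s ∧ ℓ ≠ 0 then
        if ℓ + 2 * n < 2 * m then Finsupp.single (.w s (ℓ + 2 * n)) 1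
        else if ℓ + 2 * n = 2 * m then Finsupp.single .top 1
        else 0
      else 0


lemma mul_single (s t : Bool) (hst : s ≠ t) (x : Wd) :
    (Lop k m s * Lop k m t) (Finsupp.single x 1) = ptgt k m s 1 x := by
  rcases x with _ | _ | ⟨u, ℓ⟩ <;>
      simp only [Module.End.mul_apply, Lop_single, map_zero] <;>
      [skip; simp [tgt, ptgt]; skip]
  · simp only [tgt, ptgt]
    cases s <;> cases t <;> simp_all <;>
      split_ifs <;> simp_all [tgt] <;> (try split_ifs) <;>
      first
        | rfl
        | (apply single_w_congr; omega)
        | (exfalso; omega)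
        | omega
  · simp only [tgt, ptgt]
    cases s <;> cases t <;> cases u <;> simp_all <;>
      (try by_cases hℓ : ℓ = 0) <;> simp_all <;>
      split_ifs <;> simp_all [tgt] <;> (try split_ifs) <;>
      first
        | rfl
        | (apply single_w_congr; omega)
        | (exfalso; omega)
        | omega


lemma pow_single (s t : Bool) (hst : s ≠ t) :
    ∀ n, 1 ≤ n → ∀ x : Wd,
      ((Lop k m s * Lop k m t) ^ n) (Finsupp.single x 1) = ptgt k m s n x := by
  intro n
  induction n with
  | zero => omega
  | succ n ih =>
    intro _ x
    rcases Nat.eq_zero_or_pos n with h1 | hn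
    · subst h1
      rw [pow_one]
      exact mul_single k m s t hst x
    · rw [pow_succ', Module.End.mul_apply, ih hn x]
      rcases x with _ | _ | ⟨u, ℓ⟩ <;> simp only [ptgt]
      · split_ifs <;>
          simp only [map_zero, mul_single k m s t hst, ptgt] <;>
          (try split_ifs) <;>
          first
            | rfl
            | (apply single_w_congr; omega)
            | (exfalso; omega)
            | (exfalso; simp_all; omega)
            | (simp_all; omega)
            | simp_all
      · simp
      · split_ifs <;>
          simp only [map_zero, mul_single k m s t hst, ptgt] <;>
          (try split_ifs) <;>
          first
            | rfl
            | (apply single_w_congr; omega)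
            | (exfalso; omega)
            | (exfalso; simp_all; omega)
            | (simp_all; omega)
            | simp_all

/-- The common value of `((Lop s) (Lop t))^m` : sends the empty word to `top`, all else to `0`. -/
noncomputable def Ttop : Module.End k (Wd →₀ k) :=
  Finsupp.linearCombination k
    (fun x : Wd => if x = .one then Finsupp.single Wd.top 1 else 0)

lemma pow_m (s t : Bool) (hst : s ≠ t) (hm : 1 ≤ m) :
    (Lop k m s * Lop k m t) ^ m = Ttop k := by
  apply end_ext
  intro x
  rw [pow_single k m s t hst m hm x]
  simp only [Ttop, Finsupp.linearCombination_single, one_smul]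
  rcases x with _ | _ | ⟨u, ℓ⟩ <;> simp only [ptgt] <;>
    split_ifs <;>
    first
      | rfl
      | (apply single_w_congr; omega)
      | (exfalso; omega)
      | simp_all
      | omega

lemma Ttop_mul (s : Bool) : Ttop k * Lop k m s = 0 := by
  apply end_ext
  intro x
  simp only [Module.End.mul_apply, Lop_single, LinearMap.zero_apply]
  rcases x with _ | _ | ⟨u, ℓ⟩ <;> simp [tgt, Ttop] <;> split_ifs <;> simp [Ttop]



/-! ### The quotient algebra side -/

noncomputable def gen (s : Bool) : RingQuot (TorusRel k m) :=
  RingQuot.mkAlgHom k (TorusRel k m) (ι k (if s then 0 else 1))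

noncomputable def word : Bool → ℕ → RingQuot (TorusRel k m)
  | s, 0 => gen k m s
  | s, (i + 1) => gen k m s * word (!s) i

lemma word_succ (s : Bool) (i : ℕ) :
    word k m s (i + 1) = gen k m s * word k m (!s) i := rfl

lemma gen_sq (s : Bool) : gen k m s * gen k m s = 0 := by
  cases s
  · have h := RingQuot.mkAlgHom_rel k (TorusRel.bsq (k := k) (m := m))
    simp only [map_mul, map_zero] at h
    simpa [gen] using h
  · have h := RingQuot.mkAlgHom_rel k (TorusRel.asq (k := k) (m := m))
    simp only [map_mul, map_zero] at h
    simpa [gen] using h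

lemma gen_comm (s : Bool) :
    (gen k m s * gen k m (!s)) ^ m = (gen k m (!s) * gen k m s) ^ m := by
  have h := RingQuot.mkAlgHom_rel k (TorusRel.comm (k := k) (m := m))
  simp only [map_pow, map_mul] at h
  cases s
  · simpa [gen] using h.symm
  · simpa [gen] using h

lemma gen_mul_word (s : Bool) (i : ℕ) : gen k m s * word k m s i = 0 := by
  cases i with
  | zero => exact gen_sq k m s
  | succ j => rw [word_succ, ← mul_assoc, gen_sq, zero_mul]

lemma word_odd (s : Bool) (j : ℕ) :
    word k m s (2 * j + 1) = (gen k m s * gen k m (!s)) ^ (j + 1) := by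
  induction j with
  | zero => rw [show 2 * 0 + 1 = 0 + 1 by omega, word_succ, pow_one]; rfl
  | succ j ih =>
    have h : 2 * (j + 1) + 1 = (2 * j + 1 + 1) + 1 := by omega
    rw [h, word_succ, word_succ, Bool.not_not, ih, ← mul_assoc, ← pow_succ']

lemma word_top_swap (hm : 1 ≤ m) :
    word k m true (2 * m - 1) = word k m false (2 * m - 1) := by
  have h1 : 2 * m - 1 = 2 * (m - 1) + 1 := by omega
  have h2 : m - 1 + 1 = m := by omega
  rw [h1, word_odd, word_odd, h2]
  simpa using gen_comm k m true

lemma word_2m (s : Bool) (hm : 1 ≤ m) : word k m s (2 * m) = 0 := by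
  have h1 : 2 * m = (2 * (m - 1) + 1) + 1 := by omega
  have h2 : m - 1 + 1 = m := by omega
  rw [h1, word_succ, word_odd, Bool.not_not, h2, ← gen_comm]
  have h3 := pow_succ' (gen k m s * gen k m (!s)) (m - 1)
  rw [h2] at h3
  rw [h3, ← mul_assoc, ← mul_assoc, gen_sq, zero_mul, zero_mul]

/-! ### The representation -/

noncomputable def phi (hm : 1 ≤ m) :
    RingQuot (TorusRel k m) →ₐ[k] Module.End k (Wd →₀ k) :=
  RingQuot.liftAlgHom k
    ⟨FreeAlgebra.lift k (fun v : Fin 2 => ![Lop k m true, Lop k m false] v), by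
      intro x y h
      cases h with
      | asq =>
        simp only [map_mul, map_zero, FreeAlgebra.lift_ι_apply, Matrix.cons_val_zero]
        exact Lop_sq k m true
      | bsq =>
        simp only [map_mul, map_zero, FreeAlgebra.lift_ι_apply, Matrix.cons_val_one,
          Matrix.head_cons]
        exact Lop_sq k m false
      | comm =>
        simp only [map_pow, map_mul, FreeAlgebra.lift_ι_apply, Matrix.cons_val_zero,
          Matrix.cons_val_one, Matrix.head_cons]
        rw [pow_m k m true false (by decide) hm, pow_m k m false true (by decide) hm]
      | soca =>
        simp only [map_pow, map_mul, map_zero, FreeAlgebra.lift_ι_apply,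
          Matrix.cons_val_zero, Matrix.cons_val_one, Matrix.head_cons]
        rw [pow_m k m true false (by decide) hm]
        exact Ttop_mul k m true
      | socb =>
        simp only [map_pow, map_mul, map_zero, FreeAlgebra.lift_ι_apply,
          Matrix.cons_val_zero, Matrix.cons_val_one, Matrix.head_cons]
        rw [pow_m k m false true (by decide) hm]
        exact Ttop_mul k m false⟩

lemma phi_gen (hm : 1 ≤ m) (s : Bool) : phi k m hm (gen k m s) = Lop k m s := by
  cases s <;>
    simp [phi, gen, RingQuot.liftAlgHom_mkAlgHom_apply, FreeAlgebra.lift_ι_apply]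

lemma phi_word (hm : 1 ≤ m) :
    ∀ (i : ℕ) (s : Bool), i + 1 ≤ 2 * m →
      phi k m hm (word k m s i) (Finsupp.single Wd.one 1) =
        if i + 1 < 2 * m then Finsupp.single (Wd.w s (i + 1)) 1
        else Finsupp.single Wd.top 1 := by
  intro i
  induction i with
  | zero =>
    intro s h
    rw [show word k m s 0 = gen k m s from rfl, phi_gen]
    simp only [Lop_single, tgt]
    rw [if_pos (by omega)]
  | succ i ih =>
    intro s h
    rw [word_succ, map_mul, Module.End.mul_apply, phi_gen, ih (!s) (by omega),
      if_pos (by omega)]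
    simp only [Lop_single, tgt]
    rw [if_neg (by cases s <;> simp)]
    split_ifs <;> first | rfl | omega | (exfalso; omega)

/-! ### The basis family -/

abbrev idx (m : ℕ) := (Bool × Fin (2 * m - 1)) ⊕ Bool

noncomputable def fam : idx m → RingQuot (TorusRel k m)
  | .inl p => word k m p.1 (p.2 : ℕ)
  | .inr true => 1
  | .inr false => word k m true (2 * m - 1)

def gidx : idx m → Wd
  | .inl p => .w p.1 ((p.2 : ℕ) + 1)
  | .inr true => .one
  | .inr false => .top

lemma gidx_inj : Function.Injective (gidx m) := by
  rintro (⟨s, i⟩ | b) (⟨t, j⟩ | c) h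
  · simp only [gidx, Wd.w.injEq] at h
    obtain ⟨h1, h2⟩ := h
    subst h1
    congr 1
    exact Prod.ext rfl (Fin.ext (Nat.succ_injective h2))
  · cases c <;> simp [gidx] at h
  · cases b <;> simp [gidx] at h
  · cases b <;> cases c <;> simp_all [gidx]

noncomputable def mu (hm : 1 ≤ m) : RingQuot (TorusRel k m) →ₗ[k] (Wd →₀ k) where
  toFun x := phi k m hm x (Finsupp.single Wd.one 1)
  map_add' x y := by simp [map_add]
  map_smul' c x := by simp [map_smul]

lemma mu_fam (hm : 1 ≤ m) (j : idx m) :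
    mu k m hm (fam k m j) = Finsupp.single (gidx m j) 1 := by
  rcases j with ⟨s, i⟩ | b
  · have hi : (i : ℕ) < 2 * m - 1 := i.isLt
    have : mu k m hm (fam k m (.inl (s, i))) =
        phi k m hm (word k m s i) (Finsupp.single Wd.one 1) := rfl
    rw [this, phi_word k m hm i s (by omega), if_pos (by omega)]
    rfl
  · cases b
    · have : mu k m hm (fam k m (.inr false)) =
          phi k m hm (word k m true (2 * m - 1)) (Finsupp.single Wd.one 1) := rfl
      rw [this, phi_word k m hm (2 * m - 1) true (by omega), if_neg (by omega)]
      rfl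
    · have : mu k m hm (fam k m (.inr true)) =
          phi k m hm 1 (Finsupp.single Wd.one 1) := rfl
      rw [this, map_one]
      rfl

/-! ### Spanning -/

lemma gen_mul_mem (hm : 1 ≤ m) (s : Bool) {y : RingQuot (TorusRel k m)}
    (hy : y ∈ Submodule.span k (Set.range (fam k m))) :
    gen k m s * y ∈ Submodule.span k (Set.range (fam k m)) := by
  refine Submodule.span_induction ?_ ?_ ?_ ?_ hy
  · rintro x ⟨j, rfl⟩
    rcases j with ⟨t, i⟩ | b
    · show gen k m s * word k m t i ∈ _
      by_cases hst : s = t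
      · subst hst
        rw [gen_mul_word]
        exact zero_mem _
      · have ht : t = !s := by cases s <;> cases t <;> simp_all
        subst ht
        rw [← word_succ]
        by_cases h2 : (i : ℕ) + 1 < 2 * m - 1
        · exact Submodule.subset_span ⟨Sum.inl (s, ⟨(i : ℕ) + 1, h2⟩), rfl⟩
        · have h3 : (i : ℕ) + 1 = 2 * m - 1 := by have := i.isLt; omega
          rw [h3]
          cases s
          · rw [← word_top_swap k m hm]
            exact Submodule.subset_span ⟨Sum.inr false, rfl⟩
          · exact Submodule.subset_span ⟨Sum.inr false, rfl⟩
    · cases b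
      · show gen k m s * word k m true (2 * m - 1) ∈ _
        cases s
        · have h4 : gen k m false * word k m true (2 * m - 1)
              = word k m false (2 * m - 1 + 1) := by
            rw [word_succ]; rfl
          rw [h4, show 2 * m - 1 + 1 = 2 * m by omega, word_2m k m false hm]
          exact zero_mem _
        · rw [gen_mul_word]
          exact zero_mem _
      · show gen k m s * 1 ∈ _
        rw [mul_one]
        exact Submodule.subset_span ⟨Sum.inl (s, ⟨0, by omega⟩), rfl⟩
  · rw [mul_zero]; exact zero_mem _
  · intro x y _ _ ihx ihy
    rw [mul_add]; exact add_mem ihx ihy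
  · intro c x _ ihx
    rw [mul_smul_comm]; exact Submodule.smul_mem _ _ ihx

lemma mk_mul_mem (hm : 1 ≤ m) (z : FreeAlgebra k (Fin 2))
    {y : RingQuot (TorusRel k m)}
    (hy : y ∈ Submodule.span k (Set.range (fam k m))) :
    RingQuot.mkAlgHom k (TorusRel k m) z * y ∈
      Submodule.span k (Set.range (fam k m)) := by
  induction z using FreeAlgebra.induction generalizing y with
  | grade0 r =>
    rw [AlgHom.commutes, ← Algebra.smul_def]
    exact Submodule.smul_mem _ _ hy
  | grade1 v =>
    fin_cases v
    · have hv : RingQuot.mkAlgHom k (TorusRel k m) (ι k 0) = gen k m true := by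
        simp [gen]
      rw [show (⟨0, by omega⟩ : Fin 2) = 0 from rfl, hv]
      exact gen_mul_mem k m hm true hy
    · have hv : RingQuot.mkAlgHom k (TorusRel k m) (ι k 1) = gen k m false := by
        simp [gen]
      rw [show (⟨1, by omega⟩ : Fin 2) = 1 from rfl, hv]
      exact gen_mul_mem k m hm false hy
  | mul a b iha ihb =>
    rw [map_mul, mul_assoc]
    exact iha (ihb hy)
  | add a b iha ihb =>
    rw [map_add, add_mul]
    exact add_mem (iha hy) (ihb hy)

lemma span_fam (hm : 1 ≤ m) :
    ⊤ ≤ Submodule.span k (Set.range (fam k m)) := by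
  intro x _
  obtain ⟨z, rfl⟩ := RingQuot.mkAlgHom_surjective k (TorusRel k m) x
  have h1 : (1 : RingQuot (TorusRel k m)) ∈ Submodule.span k (Set.range (fam k m)) :=
    Submodule.subset_span ⟨Sum.inr true, rfl⟩
  simpa using mk_mul_mem k m hm z h1

lemma li_fam (hm : 1 ≤ m) : LinearIndependent k (fam k m) := by
  apply LinearIndependent.of_comp (mu k m hm)
  have h : (mu k m hm) ∘ (fam k m) = fun j => Finsupp.single (gidx m j) 1 :=
    funext (mu_fam k m hm)
  rw [h]
  have hs : LinearIndependent k (fun w : Wd => Finsupp.single w (1 : k)) := by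
    simpa [Finsupp.coe_basisSingleOne] using
      (Finsupp.basisSingleOne (R := k) (ι := Wd)).linearIndependent
  exact hs.comp (gidx m) (gidx_inj m)
end TorusAux

/-- The torus-loop algebra is a free `k`-module of rank `4m`. -/
theorem stmt_0 (k : Type*) [Field k] (m : ℕ) (hm : 1 ≤ m) :
    Module.Free k (RingQuot (TorusRel k m)) ∧
      Module.finrank k (RingQuot (TorusRel k m)) = 4 * m := by
  refine ⟨inferInstance, ?_⟩
  have B : Module.Basis (TorusAux.idx m) k (RingQuot (TorusRel k m)) :=
    Module.Basis.mk (TorusAux.li_fam k m hm) (TorusAux.span_fam k m hm)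
  rw [Module.finrank_eq_card_basis B]
  simp only [TorusAux.idx, Fintype.card_sum, Fintype.card_prod, Fintype.card_bool,
    Fintype.card_fin]
  omega
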